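/- Let 𝒮 = (S_1,…,S_k) be a list of nonempty subsets of a finite set N, let v_𝒮 be the associated game, and let x ∈ ℤ^N be an integer payoff vector with x_i ≥ 0 for all i that belongs to the core of (N, v_𝒮). Then there exists an allocation function f : {1,…,k} → N with f(j) ∈ S_j for every j, such that |{j : f(j) = i}| = x_i for every player i ∈ N. -/
import Mathlib


open Finset

/-- A game is convex if marginal contributions increase with coalition size. -/
def IsConvex {α : Type*} [DecidableEq α] (v : Finset α → ℝ) : Prop :=
  ∀ (i : α) (S T : Finset α), S ⊆ T → i ∉ T →
    v (insert i S) - v S ≤ v (insert i T) - v T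

/-- An integer game: every coalition value is an integer. -/
def IsIntegerGame {α : Type*} (v : Finset α → ℝ) : Prop :=
  ∀ S : Finset α, ∃ z : ℤ, v S = (z : ℝ)

/-- A size-bounded game: `v S < |S|` for every nonempty coalition. -/
def IsSizeBounded {α : Type*} (v : Finset α → ℝ) : Prop :=
  ∀ S : Finset α, S.Nonempty → v S < (S.card : ℝ)

/-- A payoff vector belongs to the core. -/
def InCore {α : Type*} [Fintype α] [DecidableEq α] (v : Finset α → ℝ) (x : α → ℝ) : Prop :=
  (∑ i, x i) = v Finset.univ ∧ ∀ S : Finset α, v S ≤ ∑ i ∈ S, x i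

/-- The set of players preceding `i` in the ordering `σ`. -/
def preSet {α : Type*} [Fintype α] [DecidableEq α]
    (σ : α ≃ Fin (Fintype.card α)) (i : α) : Finset α :=
  Finset.univ.filter (fun j => σ j < σ i)

/-- The Shapley value of player `i`: average marginal contribution over all orderings. -/
noncomputable def SV {α : Type*} [Fintype α] [DecidableEq α]
    (v : Finset α → ℝ) (i : α) : ℝ :=
  (∑ σ : α ≃ Fin (Fintype.card α), (v (insert i (preSet σ i)) - v (preSet σ i))) /
    (Nat.factorial (Fintype.card α) : ℝ)

/-- The Harsanyi dividend of a coalition. -/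
noncomputable def dividend {α : Type*} [DecidableEq α] (v : Finset α → ℝ) (S : Finset α) : ℝ :=
  ∑ T ∈ S.powerset, (-1 : ℝ) ^ (S.card - T.card) * v T

/-- A positive game: all Harsanyi dividends are nonnegative. -/
def IsPositive {α : Type*} [DecidableEq α] (v : Finset α → ℝ) : Prop :=
  ∀ S : Finset α, 0 ≤ dividend v S

/-- The `c`-reduced game on player set `N \ {i}`. -/
noncomputable def reducedGame {α : Type*} [Fintype α] [DecidableEq α]
    (v : Finset α → ℝ) (i : α) (c : ℝ) : Finset {j : α // j ≠ i} → ℝ :=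
  fun S =>
    if S = Finset.univ then v Finset.univ - c
    else if S = ∅ then 0
    else max (v (insert i (S.image Subtype.val)) - c) (v (S.image Subtype.val))

theorem stmt15 {N : Type*} [Fintype N] [DecidableEq N] [Nonempty N]
    (k : ℕ) (𝒮 : Fin k → Finset N) (h𝒮 : ∀ j, (𝒮 j).Nonempty)
    (x : N → ℤ) (hx0 : ∀ i, 0 ≤ x i)
    (hx : InCore (fun S => ((Finset.univ.filter (fun j => 𝒮 j ⊆ S)).card : ℝ))
      (fun i => (x i : ℝ))) :
    ∃ f : Fin k → N, (∀ j, f j ∈ 𝒮 j) ∧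
      ∀ i : N, ((Finset.univ.filter (fun j => f j = i)).card : ℤ) = x i := by
    classical
  set n : N → ℕ := fun i => (x i).toNat with hn
  have hxn : ∀ i, (n i : ℤ) = x i := fun i => Int.toNat_of_nonneg (hx0 i)
  -- total payoff is k
  have hsum : ∑ i, (x i : ℝ) = (k : ℝ) := by
    have h1 := hx.1
    have h2 : (Finset.univ.filter (fun j : Fin k => 𝒮 j ⊆ Finset.univ)) = Finset.univ := by
      ext j; simp [Finset.subset_univ]
    simp only [h2] at h1
    simpa using h1
  have hsumn : ∑ i, n i = k := by
    have : ((∑ i, n i : ℕ) : ℝ) = (k : ℝ) := by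
      push_cast
      rw [← hsum]
      exact Finset.sum_congr rfl (fun i _ => by exact_mod_cast congrArg (Int.cast : ℤ → ℝ) (hxn i))
    exact_mod_cast this
  -- slots
  have key : ∀ T : Finset N,
      (Finset.univ.filter (fun p : Σ i : N, Fin (n i) => p.1 ∈ T)).card = ∑ i ∈ T, n i := by
    intro T
    have h : Finset.univ.filter (fun p : Σ i : N, Fin (n i) => p.1 ∈ T)
        = T.sigma (fun _ => Finset.univ) := by
      ext p; simp [Finset.mem_sigma]
    rw [h, Finset.card_sigma]; simp
  set t : Fin k → Finset (Σ i : N, Fin (n i)) :=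
    fun j => Finset.univ.filter (fun p => p.1 ∈ 𝒮 j) with ht
  have hall : ∀ J : Finset (Fin k), J.card ≤ (J.biUnion t).card := by
    intro J
    have h1 : J.biUnion t = Finset.univ.filter (fun p : Σ i : N, Fin (n i) => p.1 ∈ J.biUnion 𝒮) := by
      ext p; simp [ht]
    rw [h1, key]
    set T := J.biUnion 𝒮 with hT
    have h2 : (J.card : ℝ) ≤ ∑ i ∈ T, (x i : ℝ) := by
      calc (J.card : ℝ) ≤ ((Finset.univ.filter (fun j : Fin k => 𝒮 j ⊆ T)).card : ℝ) := by
            have : J ⊆ Finset.univ.filter (fun j : Fin k => 𝒮 j ⊆ T) := by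
              intro j hj
              simp only [Finset.mem_filter, Finset.mem_univ, true_and]
              exact fun i hi => Finset.mem_biUnion.2 ⟨j, hj, hi⟩
            exact_mod_cast Finset.card_le_card this
        _ ≤ ∑ i ∈ T, (x i : ℝ) := hx.2 T
    have h3 : ∑ i ∈ T, (x i : ℝ) = ((∑ i ∈ T, n i : ℕ) : ℝ) := by
      push_cast
      exact Finset.sum_congr rfl (fun i _ => by exact_mod_cast (congrArg (Int.cast : ℤ → ℝ) (hxn i)).symm)
    rw [h3] at h2
    exact_mod_cast h2
  obtain ⟨f, hinj, hf⟩ := (Finset.all_card_le_biUnion_card_iff_exists_injective t).mp hall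
  refine ⟨fun j => (f j).1, fun j => ?_, ?_⟩
  · have := hf j
    simpa [ht] using this
  · -- counting
    have fib_le : ∀ i, (Finset.univ.filter (fun j => (f j).1 = i)).card ≤ n i := by
      intro i
      have h1 : ((Finset.univ.filter (fun j => (f j).1 = i)).image f).card
          = (Finset.univ.filter (fun j => (f j).1 = i)).card :=
        Finset.card_image_of_injective _ hinj
      have h2 : (Finset.univ.filter (fun j => (f j).1 = i)).image f
          ⊆ Finset.univ.filter (fun p : Σ i : N, Fin (n i) => p.1 = i) := by
        intro p hp
        simp only [Finset.mem_image, Finset.mem_filter, Finset.mem_univ, true_and] at hp ⊢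
        obtain ⟨j, hj, rfl⟩ := hp
        exact hj
      have h3 : (Finset.univ.filter (fun p : Σ i : N, Fin (n i) => p.1 = i)).card = n i := by
        have := key {i}
        simpa using this
      calc (Finset.univ.filter (fun j => (f j).1 = i)).card
          = ((Finset.univ.filter (fun j => (f j).1 = i)).image f).card := h1.symm
        _ ≤ _ := Finset.card_le_card h2
        _ = n i := h3
    have total : ∑ i, (Finset.univ.filter (fun j => (f j).1 = i)).card = k := by
      have := Finset.card_eq_sum_card_fiberwise
        (f := fun j => (f j).1) (s := (Finset.univ : Finset (Fin k)))
        (t := (Finset.univ : Finset N)) (fun j _ => Finset.mem_univ _)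
      simpa using this.symm
    have heq : ∀ i ∈ (Finset.univ : Finset N),
        (Finset.univ.filter (fun j => (f j).1 = i)).card = n i := by
      rw [← Finset.sum_eq_sum_iff_of_le (fun i _ => fib_le i)]
      rw [total, hsumn]
    intro i
    rw [heq i (Finset.mem_univ i), hxn i]
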